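/- arXiv:1609.08438 — 2 statements merged into one kernel-verified Lean document; each statement's English description precedes it below -/
import Mathlib

section
/- Let J be a convex one-homogeneous functional and let u(t) solve the forward flow u_t = u/‖u‖ - p/‖p‖ with p(t) ∈ ∂J(u(t)), assuming ‖u(t)‖ ≠ 0 and ‖p(t)‖ ≠ 0. Then d/dt J(u(t)) = J(u)/‖u‖ - ‖p‖ ≤ 0, with equality at time t if and only if u(t) is an eigenfunction (p = λu for some λ). -/
open RealInnerProductSpace

def IsSubgradient {N : ℕ} (J : EuclideanSpace ℝ (Fin N) → ℝ)
    (u p : EuclideanSpace ℝ (Fin N)) : Prop :=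
  ∀ v, J v - J u ≥ ⟪p, v - u⟫

theorem stmt9 {N : ℕ} (J : EuclideanSpace ℝ (Fin N) → ℝ)
    (hconv : ConvexOn ℝ Set.univ J)
    (hhom : ∀ (α : ℝ) (w : EuclideanSpace ℝ (Fin N)), J (α • w) = |α| * J w)
    (u p : ℝ → EuclideanSpace ℝ (Fin N))
    (hp : ∀ t, IsSubgradient J (u t) (p t))
    (hu0 : ∀ t, ‖u t‖ ≠ 0) (hp0 : ∀ t, ‖p t‖ ≠ 0)
    (hflow : ∀ t, HasDerivAt u ((‖u t‖)⁻¹ • u t - (‖p t‖)⁻¹ • p t) t)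
    (hchain : ∀ t, HasDerivAt (fun s => J (u s))
      ⟪p t, (‖u t‖)⁻¹ • u t - (‖p t‖)⁻¹ • p t⟫ t) :
    ∀ t, (⟪p t, (‖u t‖)⁻¹ • u t - (‖p t‖)⁻¹ • p t⟫ = J (u t) / ‖u t‖ - ‖p t‖)
      ∧ ⟪p t, (‖u t‖)⁻¹ • u t - (‖p t‖)⁻¹ • p t⟫ ≤ 0
      ∧ (⟪p t, (‖u t‖)⁻¹ • u t - (‖p t‖)⁻¹ • p t⟫ = 0 ↔
          ∃ lam : ℝ, p t = lam • u t) := by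
  intro t
  have hu := hu0 t
  have hpn := hp0 t
  -- J(u) = ⟪p, u⟫
  have h2 := hp t ((2:ℝ) • u t)
  have h0 := hp t 0
  have hJ2 : J ((2:ℝ) • u t) = 2 * J (u t) := by
    rw [hhom]; norm_num
  have hJ0 : J (0 : EuclideanSpace ℝ (Fin N)) = 0 := by
    have := hhom 0 (u t); simpa using this
  have hkey : J (u t) = ⟪p t, u t⟫ := by
    rw [hJ2] at h2
    rw [hJ0] at h0
    have e2 : ((2:ℝ) • u t) - u t = u t := by
      rw [two_smul]; abel
    rw [e2] at h2
    have e0 : (0 : EuclideanSpace ℝ (Fin N)) - u t = -(u t) := by abel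
    rw [e0, inner_neg_right] at h0
    have h2' : J (u t) ≥ ⟪p t, u t⟫ := by linarith
    have h0' : ⟪p t, u t⟫ ≥ J (u t) := by linarith
    linarith
  -- expand the inner product
  have hinner : ⟪p t, (‖u t‖)⁻¹ • u t - (‖p t‖)⁻¹ • p t⟫
      = (‖u t‖)⁻¹ * ⟪p t, u t⟫ - ‖p t‖ := by
    rw [inner_sub_right, real_inner_smul_right, real_inner_smul_right,
      real_inner_self_eq_norm_sq]
    field_simp
  have heq : ⟪p t, (‖u t‖)⁻¹ • u t - (‖p t‖)⁻¹ • p t⟫ = J (u t) / ‖u t‖ - ‖p t‖ := by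
    rw [hinner, hkey, div_eq_inv_mul]
  have hupos : (0:ℝ) < ‖u t‖ := lt_of_le_of_ne (norm_nonneg _) (Ne.symm hu)
  have hCS : ⟪p t, u t⟫ ≤ ‖p t‖ * ‖u t‖ := real_inner_le_norm _ _
  have hle : ⟪p t, (‖u t‖)⁻¹ • u t - (‖p t‖)⁻¹ • p t⟫ ≤ 0 := by
    rw [hinner]
    rw [sub_nonpos]
    rw [inv_mul_le_iff₀ hupos]
    linarith [hCS]
  refine ⟨heq, hle, ?_, ?_⟩
  · intro h
    rw [hinner] at h
    have h' : ‖u t‖⁻¹ * ⟪p t, u t⟫ = ‖p t‖ := by linarith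
    have hin : ⟪p t, u t⟫ = ‖p t‖ * ‖u t‖ := by
      calc ⟪p t, u t⟫ = ‖u t‖ * (‖u t‖⁻¹ * ⟪p t, u t⟫) := by
            rw [← mul_assoc, mul_inv_cancel₀ hu, one_mul]
        _ = ‖u t‖ * ‖p t‖ := by rw [h']
        _ = ‖p t‖ * ‖u t‖ := mul_comm _ _
    have hdep := (inner_eq_norm_mul_iff_real).1 hin
    refine ⟨‖p t‖ / ‖u t‖, ?_⟩
    rw [div_eq_inv_mul, mul_smul, ← hdep, smul_smul, inv_mul_cancel₀ hu, one_smul]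
  · rintro ⟨lam, hl⟩
    -- J(u) ≥ 0
    have hJnn : 0 ≤ J (u t) := by
      have hc := hconv.2 (Set.mem_univ (u t)) (Set.mem_univ (-(u t)))
        (by norm_num : (0:ℝ) ≤ (1:ℝ)/2) (by norm_num : (0:ℝ) ≤ (1:ℝ)/2) (by norm_num)
      have hJneg : J (-(u t)) = J (u t) := by
        have := hhom (-1) (u t); simpa using this
      have hmid : ((1:ℝ)/2) • u t + ((1:ℝ)/2) • (-(u t)) = 0 := by
        rw [smul_neg]; abel
      rw [hmid, hJ0, hJneg] at hc
      simp only [smul_eq_mul] at hc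
      linarith
    have hlamnn : 0 ≤ lam := by
      have hip : ⟪p t, u t⟫ = lam * ‖u t‖ ^ 2 := by
        rw [hl, real_inner_smul_left, real_inner_self_eq_norm_sq]
      have h2' : 0 ≤ lam * ‖u t‖ ^ 2 := by rw [← hip, ← hkey]; exact hJnn
      nlinarith [pow_pos hupos 2]
    rw [hinner, hl, real_inner_smul_left, real_inner_self_eq_norm_sq,
      norm_smul, Real.norm_eq_abs, abs_of_nonneg hlamnn]
    field_simp
    ring
end

section
/- For the inverse flow u_t = -u/‖u‖ + p/‖p‖ with p ∈ ∂J(u), one has d/dt J(u(t)) = ‖p‖ - J(u)/‖u‖ ≥ 0 and (1/2) d/dt ‖u(t)‖² = J(u)/‖p‖ - ‖u‖ ≤ 0, with equalities if and only if u is an eigenfunction. -/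
open RealInnerProductSpace

theorem stmt12 {N : ℕ} (J : EuclideanSpace ℝ (Fin N) → ℝ)
    (hconv : ConvexOn ℝ Set.univ J)
    (hhom : ∀ (α : ℝ) (w : EuclideanSpace ℝ (Fin N)), J (α • w) = |α| * J w)
    (u p : ℝ → EuclideanSpace ℝ (Fin N))
    (hp : ∀ t, IsSubgradient J (u t) (p t))
    (hu0 : ∀ t, ‖u t‖ ≠ 0) (hp0 : ∀ t, ‖p t‖ ≠ 0)
    (hflow : ∀ t, HasDerivAt u (-(‖u t‖)⁻¹ • u t + (‖p t‖)⁻¹ • p t) t)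
    (hchainJ : ∀ t, HasDerivAt (fun s => J (u s))
      ⟪p t, -(‖u t‖)⁻¹ • u t + (‖p t‖)⁻¹ • p t⟫ t)
    (hchainN : ∀ t, HasDerivAt (fun s => (1/2 : ℝ) * ‖u s‖ ^ 2)
      ⟪u t, -(‖u t‖)⁻¹ • u t + (‖p t‖)⁻¹ • p t⟫ t) :
    ∀ t, (⟪p t, -(‖u t‖)⁻¹ • u t + (‖p t‖)⁻¹ • p t⟫ = ‖p t‖ - J (u t) / ‖u t‖)
      ∧ 0 ≤ ⟪p t, -(‖u t‖)⁻¹ • u t + (‖p t‖)⁻¹ • p t⟫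
      ∧ (⟪u t, -(‖u t‖)⁻¹ • u t + (‖p t‖)⁻¹ • p t⟫ = J (u t) / ‖p t‖ - ‖u t‖)
      ∧ ⟪u t, -(‖u t‖)⁻¹ • u t + (‖p t‖)⁻¹ • p t⟫ ≤ 0
      ∧ (⟪p t, -(‖u t‖)⁻¹ • u t + (‖p t‖)⁻¹ • p t⟫ = 0 ↔
          ∃ lam : ℝ, p t = lam • u t)
      ∧ (⟪u t, -(‖u t‖)⁻¹ • u t + (‖p t‖)⁻¹ • p t⟫ = 0 ↔
          ∃ lam : ℝ, p t = lam • u t) := by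
  intro t
  set U := u t with hU
  set P := p t with hP
  have hUn := hu0 t
  have hPn := hp0 t
  have hUpos : (0:ℝ) < ‖U‖ := lt_of_le_of_ne (norm_nonneg _) (Ne.symm hUn)
  have hPpos : (0:ℝ) < ‖P‖ := lt_of_le_of_ne (norm_nonneg _) (Ne.symm hPn)
  -- J U = ⟪P, U⟫
  have hJ0 : J (0 : EuclideanSpace ℝ (Fin N)) = 0 := by
    simpa using hhom 0 U
  have h1 := hp t ((2:ℝ) • U)
  rw [hhom 2 U] at h1
  have e1 : ((2:ℝ) • U - U) = U := by
    rw [two_smul]; abel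
  rw [e1] at h1
  have h2 := hp t 0
  simp only [hJ0, zero_sub, inner_neg_right] at h2
  have hJeq : J U = ⟪P, U⟫ := by
    have : |(2:ℝ)| = 2 := by norm_num
    rw [this] at h1
    linarith
  have h3 := hp t (-U)
  have e3 : J (-U) = J U := by
    have := hhom (-1) U
    simpa using this
  rw [e3] at h3
  have e3' : (-U - U) = (-2:ℝ) • U := by
    rw [neg_smul]; rw [two_smul]; abel
  rw [e3', real_inner_smul_right] at h3
  have hJnn : 0 ≤ J U := by rw [hJeq]; linarith
  have hCS : ⟪P, U⟫ ≤ ‖P‖ * ‖U‖ := real_inner_le_norm P U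
  -- main computations
  have hA : ⟪P, -(‖U‖)⁻¹ • U + (‖P‖)⁻¹ • P⟫ = ‖P‖ - J U / ‖U‖ := by
    rw [inner_add_right, real_inner_smul_right, real_inner_smul_right,
      real_inner_self_eq_norm_sq, hJeq]
    field_simp
    ring
  have hB : ⟪U, -(‖U‖)⁻¹ • U + (‖P‖)⁻¹ • P⟫ = J U / ‖P‖ - ‖U‖ := by
    rw [inner_add_right, real_inner_smul_right, real_inner_smul_right,
      real_inner_self_eq_norm_sq, hJeq, real_inner_comm]
    field_simp
    ring
  have hAnn : 0 ≤ ⟪P, -(‖U‖)⁻¹ • U + (‖P‖)⁻¹ • P⟫ := by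
    rw [hA, hJeq, sub_nonneg, div_le_iff₀ hUpos]
    exact hCS
  have hBnp : ⟪U, -(‖U‖)⁻¹ • U + (‖P‖)⁻¹ • P⟫ ≤ 0 := by
    rw [hB, hJeq, sub_nonpos, div_le_iff₀ hPpos]
    linarith
  -- equality iff eigenfunction
  have key : ⟪P, U⟫ = ‖P‖ * ‖U‖ ↔ ∃ lam : ℝ, P = lam • U := by
    constructor
    · intro h
      have h' := inner_eq_norm_mul_iff_real.mp h
      refine ⟨‖U‖⁻¹ * ‖P‖, ?_⟩
      rw [← smul_smul, ← h', smul_smul, inv_mul_cancel₀ hUn, one_smul]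
    · rintro ⟨lam, hlam⟩
      have hip : ⟪P, U⟫ = lam * ‖U‖ ^ 2 := by
        rw [hlam, real_inner_smul_left, real_inner_self_eq_norm_sq]
      have hlnn : 0 ≤ lam := by
        nlinarith [hip, hJnn, hJeq, pow_pos hUpos 2]
      have hnp : ‖P‖ = lam * ‖U‖ := by
        rw [hlam, norm_smul, Real.norm_eq_abs, abs_of_nonneg hlnn]
      rw [hip, hnp]; ring
  have keyA : ⟪P, -(‖U‖)⁻¹ • U + (‖P‖)⁻¹ • P⟫ = 0 ↔ ∃ lam : ℝ, P = lam • U := by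
    rw [hA, hJeq]
    rw [← key]
    constructor
    · intro h
      rw [sub_eq_zero, eq_comm, div_eq_iff hUn] at h
      exact h
    · intro h
      rw [h]
      field_simp
      ring
  have keyB : ⟪U, -(‖U‖)⁻¹ • U + (‖P‖)⁻¹ • P⟫ = 0 ↔ ∃ lam : ℝ, P = lam • U := by
    rw [hB, hJeq]
    rw [← key]
    constructor
    · intro h
      rw [sub_eq_zero, div_eq_iff hPn] at h
      linarith [h]
    · intro h
      rw [h]
      field_simp
      ring
  exact ⟨hA, hAnn, hB, hBnp, keyA, keyB⟩
end
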